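/- With the data of the multiply warped example (k ≥ 2; positive integers r₁,…,r_k; n, C, L, ε, I; functions h₁,…,h_k, f, λ as defined), for every 1 ≤ i ≤ k and every s ∈ I one has −h_i''(s)/h_i(s) − (r_i − 1)·(h_i'(s)/h_i(s))² − (h_i'(s)/h_i(s))·Σ_{j ≠ i} r_j·h_j'(s)/h_j(s) + f'(s)·h_i'(s)/h_i(s) = λ(s). -/

import Mathlib

/-- In the multiply warped example, the i-th fiber almost Ricci
soliton equation −h_i''/h_i − (r_i−1)(h_i'/h_i)² − (h_i'/h_i)·Σ_{j≠i} r_j·h_j'/h_j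
+ f'·h_i'/h_i = λ holds on I for every 1 ≤ i ≤ k. -/
theorem stmt_14 (k : ℕ) (hk : 2 ≤ k) (r : ℕ → ℕ)
    (hr : ∀ j ∈ Finset.Icc 1 k, 0 < r j)
    (n : ℕ) (hn : n = (∑ j ∈ Finset.Icc 1 k, r j) + 1)
    (C L ε : ℝ) (hC : C = ∑ j ∈ Finset.Icc 1 k, (r j : ℝ) * (j : ℝ))
    (hL2 : 0 < ((n : ℝ) - 1) * (∑ j ∈ Finset.Icc 1 k, (r j : ℝ) * (j : ℝ) ^ 2) - C ^ 2)
    (hL : L = Real.sqrt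
      (((n : ℝ) - 1) * (∑ j ∈ Finset.Icc 1 k, (r j : ℝ) * (j : ℝ) ^ 2) - C ^ 2))
    (hε : ε = Real.pi / (2 * L))
    (h : ℕ → ℝ → ℝ) (f lam : ℝ → ℝ)
    (hh : ∀ i ∈ Finset.Icc 1 k, ∀ s ∈ Set.Ioo (-ε) ε,
      h i s = Real.exp (((i : ℝ) - C / ((n : ℝ) - 1)) * s)
        * Real.cos (L * s) ^ (-(1 / ((n : ℝ) - 1))))
    (hf : ∀ s ∈ Set.Ioo (-ε) ε, f s = -Real.log (Real.cos (L * s)))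
    (hlam : ∀ s ∈ Set.Ioo (-ε) ε,
      lam s = -L ^ 2 / (((n : ℝ) - 1) * Real.cos (L * s) ^ 2)) :
    ∀ i ∈ Finset.Icc 1 k, ∀ s ∈ Set.Ioo (-ε) ε,
      -(deriv (deriv (h i)) s / h i s)
        - ((r i : ℝ) - 1) * (deriv (h i) s / h i s) ^ 2
        - (deriv (h i) s / h i s)
          * (∑ j ∈ (Finset.Icc 1 k).erase i, (r j : ℝ) * deriv (h j) s / h j s)
        + deriv f s * (deriv (h i) s / h i s)
        = lam s := by
  intro i hi s hs
  set N : ℝ := (n : ℝ) - 1 with hNdef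
  -- N is positive
  have hsumk : k ≤ ∑ j ∈ Finset.Icc 1 k, r j := by
    calc k = ∑ _j ∈ Finset.Icc 1 k, 1 := by simp
    _ ≤ ∑ j ∈ Finset.Icc 1 k, r j := Finset.sum_le_sum (fun j hj => hr j hj)
  have hNpos : 0 < N := by
    rw [hNdef, hn]
    have h1 : (2 : ℝ) ≤ (k : ℝ) := by exact_mod_cast hk
    have h2 : (k : ℝ) ≤ ∑ j ∈ Finset.Icc 1 k, (r j : ℝ) := by exact_mod_cast hsumk
    push_cast
    linarith
  have hNne : N ≠ 0 := hNpos.ne'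
  have hLpos : 0 < L := by
    rw [hL]; exact Real.sqrt_pos.mpr hL2
  have hεpos : 0 < ε := by
    rw [hε]; positivity
  have hLε : L * ε = Real.pi / 2 := by
    rw [hε]; field_simp
  -- cosine positivity on the interval
  have hcospos : ∀ s' ∈ Set.Ioo (-ε) ε, 0 < Real.cos (L * s') := by
    intro s' hs'
    apply Real.cos_pos_of_mem_Ioo
    constructor
    · have := mul_lt_mul_of_pos_left hs'.1 hLpos
      rw [mul_neg, hLε] at this
      simpa using this
    · have := mul_lt_mul_of_pos_left hs'.2 hLpos
      rw [hLε] at this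
      simpa using this
  set p : ℝ := -(1 / N) with hp
  set a : ℕ → ℝ := fun j => (j : ℝ) - C / N with ha
  set T : ℝ → ℝ := fun x => L * Real.sin (L * x) / (N * Real.cos (L * x)) with hT
  set G : ℕ → ℝ → ℝ := fun j x => Real.exp (a j * x) * Real.cos (L * x) ^ p with hG
  have hGh : ∀ j ∈ Finset.Icc 1 k, ∀ s' ∈ Set.Ioo (-ε) ε, h j s' = G j s' := by
    intro j hj s' hs'
    rw [hh j hj s' hs', hG, ha]
  -- derivative of cos (L x)
  have hcosD : ∀ s' : ℝ, HasDerivAt (fun x => Real.cos (L * x)) (-Real.sin (L * s') * L) s' := by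
    intro s'
    have hLx : HasDerivAt (fun x : ℝ => L * x) L s' := by
      simpa using (hasDerivAt_id s').const_mul L
    exact (Real.hasDerivAt_cos (L * s')).comp s' hLx
  -- derivative of G j
  have hGd : ∀ j : ℕ, ∀ s' ∈ Set.Ioo (-ε) ε,
      HasDerivAt (G j) ((a j + T s') * G j s') s' := by
    intro j s' hs'
    have hc := hcospos s' hs'
    have hrp : HasDerivAt (fun x => Real.cos (L * x) ^ p)
        (-Real.sin (L * s') * L * p * Real.cos (L * s') ^ (p - 1)) s' :=
      (hcosD s').rpow_const (Or.inl hc.ne')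
    have hexp : HasDerivAt (fun x => Real.exp (a j * x)) (Real.exp (a j * s') * a j) s' := by
      have hax : HasDerivAt (fun x : ℝ => a j * x) (a j) s' := by
        simpa using (hasDerivAt_id s').const_mul (a j)
      exact (Real.hasDerivAt_exp (a j * s')).comp s' hax
    have hmul := hexp.mul hrp
    convert hmul using 1
    iterate 3 rfl
    have h1 : Real.cos (L * s') ^ (p - 1) = Real.cos (L * s') ^ p / Real.cos (L * s') := by
      rw [Real.rpow_sub hc, Real.rpow_one]
    rw [h1]
    simp only [hG, hT, hp]
    field_simp
  -- derivative of T
  have hTd : ∀ s' ∈ Set.Ioo (-ε) ε,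
      HasDerivAt T (L ^ 2 / (N * Real.cos (L * s') ^ 2)) s' := by
    intro s' hs'
    have hc := hcospos s' hs'
    have hsin : HasDerivAt (fun x => L * Real.sin (L * x))
        (L * (Real.cos (L * s') * L)) s' := by
      have hLx : HasDerivAt (fun x : ℝ => L * x) L s' := by
        simpa using (hasDerivAt_id s').const_mul L
      exact ((Real.hasDerivAt_sin (L * s')).comp s' hLx).const_mul L
    have hden : HasDerivAt (fun x => N * Real.cos (L * x))
        (N * (-Real.sin (L * s') * L)) s' := (hcosD s').const_mul N
    have hne : N * Real.cos (L * s') ≠ 0 := by positivity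
    have hdiv := hsin.div hden hne
    convert hdiv using 1
    iterate 3 rfl
    have hsc := Real.sin_sq_add_cos_sq (L * s')
    field_simp
    linear_combination (-1 : ℝ) * hsc
  have hopen : Set.Ioo (-ε) ε ∈ nhds s := isOpen_Ioo.mem_nhds hs
  -- first derivative of h j
  have hderiv : ∀ j ∈ Finset.Icc 1 k, ∀ s' ∈ Set.Ioo (-ε) ε,
      deriv (h j) s' = (a j + T s') * h j s' := by
    intro j hj s' hs'
    have heq : h j =ᶠ[nhds s'] G j :=
      Filter.eventuallyEq_of_mem (isOpen_Ioo.mem_nhds hs') (fun x hx => hGh j hj x hx)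
    rw [heq.deriv_eq, (hGd j s' hs').deriv, hGh j hj s' hs']
  -- second derivative of h i
  have hc := hcospos s hs
  have hderiv2 : deriv (deriv (h i)) s
      = (L ^ 2 / (N * Real.cos (L * s) ^ 2)) * h i s + (a i + T s) ^ 2 * h i s := by
    have heq : deriv (h i) =ᶠ[nhds s] fun x => (a i + T x) * G i x :=
      Filter.eventuallyEq_of_mem hopen (fun x hx => by
        rw [hderiv i hi x hx, hGh i hi x hx])
    have hd2 : HasDerivAt (fun x => (a i + T x) * G i x)
        ((L ^ 2 / (N * Real.cos (L * s) ^ 2)) * G i s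
          + (a i + T s) * ((a i + T s) * G i s)) s :=
      (((hTd s hs).const_add (a i)).mul (hGd i s hs))
    rw [heq.deriv_eq, hd2.deriv, ← hGh i hi s hs]
    ring
  -- derivative of f
  have hfd : deriv f s = L * Real.sin (L * s) / Real.cos (L * s) := by
    have heq : f =ᶠ[nhds s] fun x => -Real.log (Real.cos (L * x)) :=
      Filter.eventuallyEq_of_mem hopen (fun x hx => hf x hx)
    have hd : HasDerivAt (fun x => -Real.log (Real.cos (L * x)))
        (-(( -Real.sin (L * s) * L) / Real.cos (L * s))) s :=
      ((hcosD s).log hc.ne').neg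
    rw [heq.deriv_eq, hd.deriv]
    ring
  -- positivity of h
  have hpos : ∀ j ∈ Finset.Icc 1 k, 0 < h j s := by
    intro j hj
    rw [hh j hj s hs]
    positivity
  have hine := (hpos i hi).ne'
  -- sum over Icc
  have hsumr : ∑ j ∈ Finset.Icc 1 k, (r j : ℝ) = N := by
    rw [hNdef, hn]
    push_cast
    ring
  have hsumfull : ∑ j ∈ Finset.Icc 1 k, (r j : ℝ) * (a j + T s) = N * T s := by
    have : ∀ j ∈ Finset.Icc 1 k, (r j : ℝ) * (a j + T s)
        = (r j : ℝ) * (j : ℝ) - (r j : ℝ) * (C / N) + (r j : ℝ) * T s := by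
      intro j _; rw [ha]; ring
    rw [Finset.sum_congr rfl this]
    rw [Finset.sum_add_distrib, Finset.sum_sub_distrib, ← Finset.sum_mul, ← Finset.sum_mul,
      ← hC, hsumr]
    field_simp
    ring
  -- the sum over the erased set
  have hsum : ∑ j ∈ (Finset.Icc 1 k).erase i, (r j : ℝ) * deriv (h j) s / h j s
      = N * T s - (r i : ℝ) * (a i + T s) := by
    have hterm : ∀ j ∈ (Finset.Icc 1 k).erase i,
        (r j : ℝ) * deriv (h j) s / h j s = (r j : ℝ) * (a j + T s) := by
      intro j hj
      have hj' : j ∈ Finset.Icc 1 k := Finset.mem_of_mem_erase hj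
      rw [hderiv j hj' s hs]
      have := (hpos j hj').ne'
      field_simp
    rw [Finset.sum_congr rfl hterm]
    have h2 := Finset.sum_erase_add (Finset.Icc 1 k) (fun j => (r j : ℝ) * (a j + T s)) hi
    rw [← hsumfull]
    linarith [h2]
  rw [hlam s hs, hderiv2, hderiv i hi s hs, hfd, hsum]
  have hTs : T s = L * Real.sin (L * s) / (N * Real.cos (L * s)) := rfl
  rw [hTs]
  field_simp
  ring
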